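/- Let F be a field of characteristic not 2, φ = ⟨1,a₁⟩⊗⋯⊗⟨1,aₙ⟩ an anisotropic n-fold Pfister form over F, and K = F(X₁,…,X_{2ⁿ}). Then the extended form φ_K is isometric to φ(X₁,…,X_{2ⁿ})·φ_K, i.e., the generic value of φ is a similarity factor of φ_K. -/

import Mathlib

/-- `pfisterVal a i v` is the value of the `i`-fold Pfister form
`⟨1, a 1⟩⊗⋯⊗⟨1, a i⟩` at the vector `(v 0, …, v (2^i − 1))`. -/
def pfisterVal {K : Type*} [Field K] (a : ℕ → K) : ℕ → (ℕ → K) → K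
  | 0, v => v 0 ^ 2
  | (i + 1), v => pfisterVal a i v + a (i + 1) * pfisterVal a i (fun j => v (2 ^ i + j))

namespace PfAux

/-! ### Pfister values over commutative rings -/

section CommRing
variable {R : Type*} [CommRing R]

/-- Commutative-ring version of `pfisterVal`. -/
def pfv (a : ℕ → R) : ℕ → (ℕ → R) → R
  | 0, v => v 0 ^ 2
  | (i + 1), v => pfv a i v + a (i + 1) * pfv a i (fun j => v (2 ^ i + j))

/-- polar-type bilinear companion -/
def pfB (a : ℕ → R) : ℕ → (ℕ → R) → (ℕ → R) → R
  | 0, x, y => 2 * x 0 * y 0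
  | (i + 1), x, y => pfB a i x y +
      a (i + 1) * pfB a i (fun j => x (2 ^ i + j)) (fun j => y (2 ^ i + j))

lemma pfv_add (a : ℕ → R) : ∀ (i : ℕ) (x y : ℕ → R),
    pfv a i (fun j => x j + y j) = pfv a i x + pfv a i y + pfB a i x y
  | 0, x, y => by simp only [pfv, pfB]; ring
  | (i + 1), x, y => by
      simp only [pfv, pfB, pfv_add a i]
      ring

lemma pfv_smul (a : ℕ → R) : ∀ (i : ℕ) (t : R) (x : ℕ → R),
    pfv a i (fun j => t * x j) = t ^ 2 * pfv a i x
  | 0, t, x => by simp only [pfv]; ring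
  | (i + 1), t, x => by
      simp only [pfv, pfv_smul a i]
      ring

lemma pfB_smul (a : ℕ → R) : ∀ (i : ℕ) (t : R) (x y : ℕ → R),
    pfB a i x (fun j => t * y j) = t * pfB a i x y
  | 0, t, x, y => by simp only [pfB]; ring
  | (i + 1), t, x, y => by
      simp only [pfB, pfB_smul a i]
      ring

lemma pfv_congr (a : ℕ → R) : ∀ (i : ℕ) (x y : ℕ → R),
    (∀ j, j < 2 ^ i → x j = y j) → pfv a i x = pfv a i y
  | 0, x, y, h => by simp only [pfv, h 0 (by norm_num)]
  | (i + 1), x, y, h => by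
      have h1 : ∀ j, j < 2 ^ i → x j = y j := fun j hj =>
        h j (lt_of_lt_of_le hj (Nat.pow_le_pow_right (by norm_num) (Nat.le_succ i)))
      have h2 : ∀ j, j < 2 ^ i → x (2 ^ i + j) = y (2 ^ i + j) := by
        intro j hj
        apply h
        have : (2:ℕ) ^ (i+1) = 2 ^ i + 2 ^ i := by rw [pow_succ]; ring
        omega
      simp only [pfv, pfv_congr a i x y h1, pfv_congr a i _ _ h2]

lemma pfv_map {S : Type*} [CommRing S] (f : R →+* S) (a : ℕ → R) :
    ∀ (i : ℕ) (x : ℕ → R),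
      f (pfv a i x) = pfv (fun j => f (a j)) i (fun j => f (x j))
  | 0, x => by simp [pfv]
  | (i + 1), x => by
      simp only [pfv, map_add, map_mul, map_pow, pfv_map f a i]

lemma pfv_zero (a : ℕ → R) : ∀ i : ℕ, pfv a i (fun _ => (0:R)) = 0
  | 0 => by simp [pfv]
  | (i + 1) => by simp only [pfv, pfv_zero a i, mul_zero, add_zero]

lemma pfv_delta (a : ℕ → R) :
    ∀ i : ℕ, pfv a i (fun j => if j = 0 then (1:R) else 0) = 1
  | 0 => by simp [pfv]
  | (i + 1) => by
      have h : (fun j => if 2 ^ i + j = 0 then (1:R) else 0) = (fun _ => (0:R)) := by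
        funext j
        have : 2 ^ i + j ≠ 0 := by positivity
        simp [this]
      simp only [pfv, h, pfv_zero a i, mul_zero, add_zero, pfv_delta a i]

end CommRing

section Field

variable {K : Type*} [Field K]

lemma pfv_eq (a : ℕ → K) : ∀ (i : ℕ) (x : ℕ → K), pfv a i x = pfisterVal a i x
  | 0, x => rfl
  | (i + 1), x => by simp only [pfv, pfisterVal, pfv_eq a i]

lemma two_pow_succ (i : ℕ) : (2:ℕ) ^ (i + 1) = 2 ^ i + 2 ^ i := by rw [pow_succ]; ring

/-- extend a Fin-vector by zero -/
def ext (i : ℕ) (v : Fin (2 ^ i) → K) : ℕ → K :=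
  fun j => if h : j < 2 ^ i then v ⟨j, h⟩ else 0

/-- the Pfister form on `Fin (2^i) → K` -/
def qf (a : ℕ → K) (i : ℕ) (v : Fin (2 ^ i) → K) : K := pfisterVal a i (ext i v)

/-- the polar form on `Fin (2^i) → K` -/
def qB (a : ℕ → K) (i : ℕ) (x y : Fin (2 ^ i) → K) : K := pfB a i (ext i x) (ext i y)

lemma ext_add (i : ℕ) (v w : Fin (2 ^ i) → K) :
    ext i (v + w) = fun j => ext i v j + ext i w j := by
  funext j; simp only [ext, Pi.add_apply]; split_ifs <;> simp

lemma ext_smul (i : ℕ) (t : K) (v : Fin (2 ^ i) → K) :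
    ext i (t • v) = fun j => t * ext i v j := by
  funext j; simp only [ext, Pi.smul_apply, smul_eq_mul]; split_ifs <;> simp

lemma qf_add (a : ℕ → K) (i : ℕ) (x y : Fin (2 ^ i) → K) :
    qf a i (x + y) = qf a i x + qf a i y + qB a i x y := by
  unfold qf qB
  rw [← pfv_eq, ← pfv_eq, ← pfv_eq, ext_add]
  exact pfv_add a i (ext i x) (ext i y)

lemma qf_smul (a : ℕ → K) (i : ℕ) (t : K) (x : Fin (2 ^ i) → K) :
    qf a i (t • x) = t ^ 2 * qf a i x := by
  unfold qf; rw [← pfv_eq, ← pfv_eq, ext_smul]; exact pfv_smul a i t (ext i x)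

lemma qB_smul (a : ℕ → K) (i : ℕ) (t : K) (x y : Fin (2 ^ i) → K) :
    qB a i x (t • y) = t * qB a i x y := by
  unfold qB; rw [ext_smul]; exact pfB_smul a i t (ext i x) (ext i y)

lemma qf_add_smul (a : ℕ → K) (i : ℕ) (t : K) (x y : Fin (2 ^ i) → K) :
    qf a i (x + t • y) = qf a i x + t ^ 2 * qf a i y + t * qB a i x y := by
  rw [qf_add, qf_smul, qB_smul]

def loF (i : ℕ) (v : Fin (2 ^ (i + 1)) → K) : Fin (2 ^ i) → K :=
  fun j => v ⟨j, by have := j.2; have := two_pow_succ i; omega⟩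

def hiF (i : ℕ) (v : Fin (2 ^ (i + 1)) → K) : Fin (2 ^ i) → K :=
  fun j => v ⟨2 ^ i + j, by have := j.2; have := two_pow_succ i; omega⟩

def glue (i : ℕ) (x y : Fin (2 ^ i) → K) : Fin (2 ^ (i + 1)) → K :=
  fun j => if h : (j : ℕ) < 2 ^ i then x ⟨j, h⟩
    else y ⟨(j : ℕ) - 2 ^ i, by have := j.2; have := two_pow_succ i; omega⟩

lemma lo_glue (i : ℕ) (x y : Fin (2 ^ i) → K) : loF i (glue i x y) = x := by
  funext j; simp only [loF, glue, j.2, dif_pos]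

lemma hi_glue (i : ℕ) (x y : Fin (2 ^ i) → K) : hiF i (glue i x y) = y := by
  funext j
  have h : ¬ (2 ^ i + (j:ℕ) < 2 ^ i) := by omega
  simp only [hiF, glue, h, dif_neg, not_false_iff]
  congr 1
  exact Fin.ext (by simp)

lemma glue_lo_hi (i : ℕ) (v : Fin (2 ^ (i + 1)) → K) : glue i (loF i v) (hiF i v) = v := by
  funext j
  by_cases h : (j : ℕ) < 2 ^ i
  · simp only [glue, h, dif_pos, loF]
  · simp only [glue, h, dif_neg, not_false_iff, hiF]
    congr 1
    exact Fin.ext (by simp; omega)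

lemma qf_split (a : ℕ → K) (i : ℕ) (v : Fin (2 ^ (i + 1)) → K) :
    qf a (i + 1) v = qf a i (loF i v) + a (i + 1) * qf a i (hiF i v) := by
  show pfisterVal a i (ext (i+1) v) + a (i+1) * pfisterVal a i (fun j => ext (i+1) v (2^i + j))
      = pfisterVal a i (ext i (loF i v)) + a (i + 1) * pfisterVal a i (ext i (hiF i v))
  have e1 : pfisterVal a i (ext (i+1) v) = pfisterVal a i (ext i (loF i v)) := by
    rw [← pfv_eq, ← pfv_eq]
    apply pfv_congr
    intro j hj
    have hj' : j < 2 ^ (i+1) := by have := two_pow_succ i; omega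
    simp only [ext, hj, hj', dif_pos, loF]
  have e2 : pfisterVal a i (fun j => ext (i+1) v (2^i + j)) =
      pfisterVal a i (ext i (hiF i v)) := by
    rw [← pfv_eq, ← pfv_eq]
    apply pfv_congr
    intro j hj
    have hj' : 2 ^ i + j < 2 ^ (i+1) := by have := two_pow_succ i; omega
    simp only [ext, hj, hj', dif_pos, hiF]
  rw [e1, e2]

lemma qf_glue (a : ℕ → K) (i : ℕ) (x y : Fin (2 ^ i) → K) :
    qf a (i + 1) (glue i x y) = qf a i x + a (i + 1) * qf a i y := by
  rw [qf_split, lo_glue, hi_glue]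

/-- the splitting linear equivalence -/
def splitEquiv (i : ℕ) :
    (Fin (2 ^ (i + 1)) → K) ≃ₗ[K] (Fin (2 ^ i) → K) × (Fin (2 ^ i) → K) where
  toFun v := (loF i v, hiF i v)
  invFun p := glue i p.1 p.2
  map_add' v w := by
    ext j <;> simp [loF, hiF]
  map_smul' t v := by
    ext j <;> simp [loF, hiF]
  left_inv v := glue_lo_hi i v
  right_inv p := by
    ext : 1 <;> simp [lo_glue, hi_glue]

@[simp] lemma splitEquiv_apply (i : ℕ) (v : Fin (2 ^ (i + 1)) → K) :
    splitEquiv i v = (loF i v, hiF i v) := rfl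

@[simp] lemma splitEquiv_symm_apply (i : ℕ) (p : (Fin (2 ^ i) → K) × (Fin (2 ^ i) → K)) :
    (splitEquiv i).symm p = glue i p.1 p.2 := rfl

lemma qf_splitEquiv_symm (a : ℕ → K) (i : ℕ) (p : (Fin (2 ^ i) → K) × (Fin (2 ^ i) → K)) :
    qf a (i + 1) ((splitEquiv i).symm p) = qf a i p.1 + a (i + 1) * qf a i p.2 :=
  qf_glue a i p.1 p.2

/-- the 2x2 "binary change of basis" equivalence -/
def mEquiv {s b : K} (hc : s + b ≠ 0) (M : Type*) [AddCommGroup M] [Module K M] :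
    (M × M) ≃ₗ[K] (M × M) where
  toFun p := (p.1 + b • p.2, p.1 - s • p.2)
  invFun p := ((s + b)⁻¹ • (s • p.1 + b • p.2), (s + b)⁻¹ • (p.1 - p.2))
  map_add' p q := by
    simp only [Prod.fst_add, Prod.snd_add, Prod.mk_add_mk, Prod.mk.injEq]
    constructor <;> module
  map_smul' t p := by
    simp only [Prod.smul_fst, Prod.smul_snd, Prod.smul_mk, Prod.mk.injEq, RingHom.id_apply]
    constructor <;> module
  left_inv p := by
    rw [Prod.mk.injEq]
    constructor
    · have h : s • (p.1 + b • p.2) + b • (p.1 - s • p.2) = (s + b) • p.1 := by module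
      rw [h, inv_smul_smul₀ hc]
    · have h : (p.1 + b • p.2) - (p.1 - s • p.2) = (s + b) • p.2 := by module
      rw [h, inv_smul_smul₀ hc]
  right_inv p := by
    rw [Prod.mk.injEq]
    constructor
    · have h : (s + b)⁻¹ • (s • p.1 + b • p.2) + b • ((s + b)⁻¹ • (p.1 - p.2))
          = (s + b)⁻¹ • ((s + b) • p.1) := by module
      rw [h, inv_smul_smul₀ hc]
    · have h : (s + b)⁻¹ • (s • p.1 + b • p.2) - s • ((s + b)⁻¹ • (p.1 - p.2))
          = (s + b)⁻¹ • ((s + b) • p.2) := by module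
      rw [h, inv_smul_smul₀ hc]

@[simp] lemma mEquiv_apply {s b : K} (hc : s + b ≠ 0) (M : Type*) [AddCommGroup M]
    [Module K M] (p : M × M) :
    mEquiv hc M p = (p.1 + b • p.2, p.1 - s • p.2) := rfl

lemma qf_zero_dim (a : ℕ → K) (x : Fin (2 ^ 0) → K) : qf a 0 x = x 0 ^ 2 := by
  show (ext 0 x 0) ^ 2 = x 0 ^ 2
  have h0 : (0:ℕ) < 2 ^ 0 := by norm_num
  simp only [ext, h0, dif_pos]
  congr 1

/-- Roundness of Pfister forms: every represented nonzero value is a similarity factor. -/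
lemma pfister_round (a : ℕ → K) : ∀ (i : ℕ) (c : K), c ≠ 0 → (∃ x, qf a i x = c) →
    ∃ T : (Fin (2 ^ i) → K) ≃ₗ[K] (Fin (2 ^ i) → K),
      ∀ v, qf a i (T v) = c * qf a i v := by
  intro i
  induction i with
  | zero =>
    rintro c hc ⟨x, hx⟩
    rw [qf_zero_dim] at hx
    have hx0 : x 0 ≠ 0 := by
      intro h; apply hc; rw [← hx, h]; ring
    refine ⟨LinearEquiv.smulOfNeZero K _ (x 0) hx0, fun v => ?_⟩
    rw [LinearEquiv.smulOfNeZero_apply]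
    rw [qf_smul, hx]
  | succ i IH =>
    rintro c hc ⟨x, hx⟩
    set s := qf a i (loF i x) with hs
    set d := qf a i (hiF i x) with hd
    have hcx : c = s + a (i + 1) * d := by rw [← hx, qf_split]
    by_cases hd0 : d = 0
    · -- second half is zero : c = s is a similarity factor of the subform
      have hcs : c = s := by rw [hcx, hd0]; ring
      obtain ⟨S, hS⟩ := IH c hc ⟨loF i x, by rw [hcs]⟩
      refine ⟨(splitEquiv i).trans ((S.prodCongr S).trans (splitEquiv i).symm), fun v => ?_⟩
      simp only [LinearEquiv.trans_apply, splitEquiv_apply, LinearEquiv.prodCongr_apply]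
      rw [qf_splitEquiv_symm]
      simp only [hS]
      rw [qf_split]
      ring
    · obtain ⟨Sd, hSd⟩ := IH d hd0 ⟨hiF i x, rfl⟩
      by_cases hs0 : s = 0
      · -- first half is zero : swap-and-scale
        have hcad : c = a (i + 1) * d := by rw [hcx, hs0]; ring
        have haa : a (i + 1) ≠ 0 := by
          intro h; apply hc; rw [hcad, h]; ring
        refine ⟨(splitEquiv i).trans (((LinearEquiv.prodComm K _ _).trans
          (((Sd.trans (LinearEquiv.smulOfNeZero K _ _ haa)).prodCongr Sd))).trans
            (splitEquiv i).symm), fun v => ?_⟩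
        simp only [LinearEquiv.trans_apply, splitEquiv_apply, LinearEquiv.prodCongr_apply,
          LinearEquiv.prodComm_apply, Prod.swap_prod_mk, Prod.fst, Prod.snd,
          LinearEquiv.smulOfNeZero_apply]
        rw [qf_splitEquiv_symm]
        dsimp only
        rw [qf_smul, hSd, hSd, qf_split a i v, hcad]
        ring
      · -- both halves nonzero : the binary chain
        obtain ⟨Ss, hSs⟩ := IH s hs0 ⟨loF i x, rfl⟩
        set b := a (i + 1) * d with hb
        have hsb : s + b ≠ 0 := by rw [hb, ← hcx]; exact hc
        -- E : scale second slot by d*s ; A : scale slots by s and d ; M : binary step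
        set E : ((Fin (2 ^ i) → K) × (Fin (2 ^ i) → K)) ≃ₗ[K] _ :=
          (LinearEquiv.refl K (Fin (2 ^ i) → K)).prodCongr (Ss.trans Sd) with hE
        set A : ((Fin (2 ^ i) → K) × (Fin (2 ^ i) → K)) ≃ₗ[K] _ := Ss.prodCongr Sd with hA
        refine ⟨(splitEquiv i).trans (E.symm.trans (((mEquiv hsb _).trans A).trans
          (splitEquiv i).symm)), fun v => ?_⟩
        obtain ⟨q, rfl⟩ : ∃ q, v = (splitEquiv i).symm (E q) :=
          ⟨E.symm (splitEquiv i v), by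
            rw [LinearEquiv.apply_symm_apply]
            exact ((splitEquiv i).symm_apply_apply v).symm⟩
        simp only [LinearEquiv.trans_apply, LinearEquiv.apply_symm_apply,
          LinearEquiv.symm_apply_apply]
        rw [qf_splitEquiv_symm, qf_splitEquiv_symm]
        simp only [hA, hE, LinearEquiv.prodCongr_apply, mEquiv_apply, LinearEquiv.refl_apply,
          LinearEquiv.trans_apply]
        rw [hSs, hSd, hSd, hSs]
        have h1 : qf a i (q.1 + b • q.2)
            = qf a i q.1 + b ^ 2 * qf a i q.2 + b * qB a i q.1 q.2 := qf_add_smul a i b q.1 q.2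
        have h2 : qf a i (q.1 - s • q.2)
            = qf a i q.1 + (-s) ^ 2 * qf a i q.2 + (-s) * qB a i q.1 q.2 := by
          rw [sub_eq_add_neg, ← neg_smul]
          exact qf_add_smul a i (-s) q.1 q.2
        rw [h1, h2, hcx]
        ring
  end Field

end PfAux

open PfAux in
/-- The value of the Pfister polynomial at the generic point is nonzero. -/
lemma pfister_generic_nonzero (F : Type*) [Field F] (n : ℕ) (a : ℕ → F) :
    qf (fun i => algebraMap F (FractionRing (MvPolynomial (Fin (2 ^ n)) F)) (a i)) n
      (fun i => algebraMap (MvPolynomial (Fin (2 ^ n)) F)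
        (FractionRing (MvPolynomial (Fin (2 ^ n)) F)) (MvPolynomial.X i)) ≠ 0 := by
  set R := MvPolynomial (Fin (2 ^ n)) F with hR
  set g : R →+* FractionRing R := algebraMap R (FractionRing R) with hg
  set W : ℕ → R := fun j => if h : j < 2 ^ n then MvPolynomial.X (⟨j, h⟩ : Fin (2 ^ n)) else 0
    with hW
  have e1 : (fun j => algebraMap F (FractionRing R) (a j))
      = fun j => g (MvPolynomial.C (a j)) := by
    funext j
    rw [IsScalarTower.algebraMap_apply F R (FractionRing R) (a j),
      MvPolynomial.algebraMap_eq]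
  have e2 : ext n (fun i => g (MvPolynomial.X i)) = fun j => g (W j) := by
    funext j
    simp only [ext, hW]
    split_ifs with h
    · rfl
    · simp
  have key : qf (fun i => algebraMap F (FractionRing R) (a i)) n
      (fun i => g (MvPolynomial.X i))
      = g (pfv (fun j => MvPolynomial.C (a j)) n W) := by
    unfold qf
    rw [← pfv_eq, e2, e1]
    exact (pfv_map g (fun j => MvPolynomial.C (a j)) n W).symm
  rw [key]
  intro h0
  have hz : pfv (fun j => MvPolynomial.C (a j)) n W = 0 :=
    IsFractionRing.injective R (FractionRing R) (by rw [h0, map_zero])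
  have := congrArg (MvPolynomial.eval (fun j : Fin (2 ^ n) => if (j : ℕ) = 0 then (1:F) else 0))
    hz
  rw [pfv_map, map_zero] at this
  have hW' : (fun j => MvPolynomial.eval
        (fun j : Fin (2 ^ n) => if (j : ℕ) = 0 then (1:F) else 0) (W j))
      = fun j => if j = 0 then (1:F) else 0 := by
    funext j
    simp only [hW]
    by_cases h : j < 2 ^ n
    · rw [dif_pos h, MvPolynomial.eval_X]
    · have hj : j ≠ 0 := by have := Nat.one_le_two_pow (n := n); omega
      rw [dif_neg h, map_zero, if_neg hj]
  rw [hW'] at this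
  simp only [MvPolynomial.eval_C] at this
  rw [pfv_delta] at this
  exact one_ne_zero this

/-- Pfister's theorem: if `φ = ⟨1,a₁⟩⊗⋯⊗⟨1,aₙ⟩` is an anisotropic `n`-fold Pfister form
over `F` and `K = F(X₁,…,X_{2ⁿ})`, then `φ_K` is isometric to `φ(X₁,…,X_{2ⁿ})·φ_K`:
there is a `K`-linear automorphism `T` of `K^{2ⁿ}` with
`φ_K(T v) = φ(X₁,…,X_{2ⁿ})·φ_K(v)` for all `v`. -/
theorem stmt_8 (F : Type*) [Field F] (h2 : (1 : F) + 1 ≠ 0)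
    (n : ℕ) (a : ℕ → F) (ha : ∀ i, 1 ≤ i → i ≤ n → a i ≠ 0)
    (haniso : ∀ v : Fin (2 ^ n) → F,
      pfisterVal a n (fun j => if h : j < 2 ^ n then v ⟨j, h⟩ else 0) = 0 → v = 0) :
    let K := FractionRing (MvPolynomial (Fin (2 ^ n)) F)
    let A : ℕ → K := fun i => algebraMap F K (a i)
    let φK : (Fin (2 ^ n) → K) → K := fun v =>
      pfisterVal A n (fun j => if h : j < 2 ^ n then v ⟨j, h⟩ else 0)
    let X : Fin (2 ^ n) → K := fun i =>
      algebraMap (MvPolynomial (Fin (2 ^ n)) F) K (MvPolynomial.X i)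
    ∃ T : (Fin (2 ^ n) → K) ≃ₗ[K] (Fin (2 ^ n) → K),
      ∀ v : Fin (2 ^ n) → K, φK (T v) = φK X * φK v := by
  intro K A φK X
  obtain ⟨T, hT⟩ := PfAux.pfister_round A n (PfAux.qf A n X)
    (pfister_generic_nonzero F n a) ⟨X, rfl⟩
  exact ⟨T, fun v => hT v⟩
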